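/- arXiv:1005.2889 — 2 statements merged into one kernel-verified Lean document; each statement's English description precedes it below -/
import Mathlib

section
/- Let (U₀, E_{1,0}, ψ_{1,0}) be the unique solution of the half-line Schrödinger–Poisson problem. Then there exist constants a, b > 0 such that for all sufficiently large M > 0, ‖ψ_{1,0}‖_{L²(M,∞)} ≤ a e^{−bM}; in particular, with M_ε = 1/ε, this bound holds for all sufficiently small ε > 0. -/
open MeasureTheory Set Filter

open scoped Topology

noncomputable section

/-- Membership in `S_∞`: `ψ ∈ H¹(0,∞)` (with derivative `ψ'`), `ψ(0) = 0`,
`∫₀^∞ ψ² = 1`. -/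
def MemSinf (ψ ψ' : ℝ → ℝ) : Prop :=
  (∀ ξ, HasDerivAt ψ (ψ' ξ) ξ) ∧
  IntegrableOn (fun ξ => (ψ ξ) ^ 2) (Ioi 0) ∧
  IntegrableOn (fun ξ => (ψ' ξ) ^ 2) (Ioi 0) ∧
  ψ 0 = 0 ∧
  (∫ ξ in Ioi (0 : ℝ), (ψ ξ) ^ 2) = 1

/-- The energy `J_U(ψ) = ∫₀^∞ |ψ′|² + ∫₀^∞ U ψ²`. -/
def Jfun (U ψ ψ' : ℝ → ℝ) : ℝ :=
  (∫ ξ in Ioi (0 : ℝ), (ψ' ξ) ^ 2) + ∫ ξ in Ioi (0 : ℝ), U ξ * (ψ ξ) ^ 2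

/-- The fundamental mode `E₁^∞[U] = inf_{ψ ∈ S_∞} J_U(ψ)`. -/
def E1inf (U : ℝ → ℝ) : ℝ :=
  sInf {e : ℝ | ∃ ψ ψ' : ℝ → ℝ, MemSinf ψ ψ' ∧ Jfun U ψ ψ' = e}

/-- Membership in `Ḣ¹₀(ℝ⁺)`: `U` with derivative `U' ∈ L²(0,∞)`, `U(0) = 0`,
`U ≥ 0` on `[0,∞)`. -/
def MemH1dot (U U' : ℝ → ℝ) : Prop :=
  (∀ ξ, HasDerivAt U (U' ξ) ξ) ∧
  IntegrableOn (fun ξ => (U' ξ) ^ 2) (Ioi 0) ∧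
  U 0 = 0 ∧
  ∀ ξ ∈ Ici (0 : ℝ), 0 ≤ U ξ

/-- The functional `J₀(U) = (1/2)∫₀^∞ |U′|² − E₁^∞[U]`. -/
def J0fun (U U' : ℝ → ℝ) : ℝ :=
  (1 / 2) * (∫ ξ in Ioi (0 : ℝ), (U' ξ) ^ 2) - E1inf U

/-- A solution `(U, E, ψ)` of the half-line Schrödinger–Poisson problem. -/
def SPsol (U U' ψ ψ' : ℝ → ℝ) (E : ℝ) : Prop :=
  MemH1dot U U' ∧ MemSinf ψ ψ' ∧
  (∀ ξ ∈ Ioi (0 : ℝ), 0 < ψ ξ) ∧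
  (∀ ξ ∈ Ioi (0 : ℝ), HasDerivAt ψ' ((U ξ - E) * ψ ξ) ξ) ∧
  E = E1inf U ∧
  (∀ ξ ∈ Ioi (0 : ℝ), HasDerivAt U' (-(ψ ξ) ^ 2) ξ)

/-- Helper: a function integrable on `(0,∞)` cannot be bounded below by a positive
constant on a tail `(x₀,∞)`. -/
lemma aux_not_integrable {f : ℝ → ℝ} (hf : IntegrableOn f (Ioi (0:ℝ)))
    {x₀ c : ℝ} (hx₀ : 0 ≤ x₀) (hc : 0 < c) (hbd : ∀ ξ ∈ Ioi x₀, c ≤ f ξ) : False := by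
  have h1 : IntegrableOn f (Ioi x₀) := hf.mono_set (Ioi_subset_Ioi hx₀)
  have h2 : Integrable (fun _ : ℝ => c) (volume.restrict (Ioi x₀)) := by
    refine h1.mono' aestronglyMeasurable_const ?_
    filter_upwards [ae_restrict_mem measurableSet_Ioi] with ξ hξ
    rw [Real.norm_eq_abs, abs_of_pos hc]; exact hbd ξ hξ
  rcases (integrable_const_iff.mp h2) with h | h
  · exact hc.ne' h
  · have h := measure_lt_top (volume.restrict (Ioi x₀)) univ
    rw [Measure.restrict_apply_univ, Real.volume_Ioi] at h
    exact (lt_irrefl _ h).elim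

/-- Helper: monotonicity on `[a,∞)` from a nonnegative derivative. -/
lemma mono_aux {f f' : ℝ → ℝ} {a : ℝ} (hd : ∀ x ∈ Ici a, HasDerivAt f (f' x) x)
    (h0 : ∀ x ∈ Ioi a, 0 ≤ f' x) : MonotoneOn f (Ici a) := by
  apply monotoneOn_of_deriv_nonneg (convex_Ici a)
    (fun x hx => (hd x hx).continuousAt.continuousWithinAt)
  · rw [interior_Ici]
    exact fun x hx => (hd x (Ioi_subset_Ici_self hx)).differentiableAt.differentiableWithinAt
  · rw [interior_Ici]
    intro x hx; rw [(hd x (Ioi_subset_Ici_self hx)).deriv]; exact h0 x hx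

/-- Helper: antitonicity on `[a,∞)` from a nonpositive derivative. -/
lemma anti_aux {f f' : ℝ → ℝ} {a : ℝ} (hd : ∀ x ∈ Ici a, HasDerivAt f (f' x) x)
    (h0 : ∀ x ∈ Ioi a, f' x ≤ 0) : AntitoneOn f (Ici a) := by
  apply antitoneOn_of_deriv_nonpos (convex_Ici a)
    (fun x hx => (hd x hx).continuousAt.continuousWithinAt)
  · rw [interior_Ici]
    exact fun x hx => (hd x (Ioi_subset_Ici_self hx)).differentiableAt.differentiableWithinAt
  · rw [interior_Ici]
    intro x hx; rw [(hd x (Ioi_subset_Ici_self hx)).deriv]; exact h0 x hx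

/-- Helper: the tail integral of a decaying exponential. -/
lemma exp_tail_integral {b : ℝ} (hb : 0 < b) (M : ℝ) :
    ∫ ξ in Ioi M, Real.exp (-b * ξ) = Real.exp (-b * M) / b := by
  have hd : ∀ x ∈ Ici M, HasDerivAt (fun ξ => -Real.exp (-b * ξ) / b) (Real.exp (-b * x)) x := by
    intro x _
    have h1 : HasDerivAt (fun ξ : ℝ => -b * ξ) (-b) x := by
      simpa using (hasDerivAt_id x).const_mul (-b)
    have h2 := (h1.exp).neg.div_const b
    refine h2.congr_deriv ?_
    rw [div_eq_iff hb.ne']; ring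
  have hint : IntegrableOn (fun x => Real.exp (-b * x)) (Ioi M) :=
    exp_neg_integrableOn_Ioi M hb
  have htend : Tendsto (fun ξ => -Real.exp (-b * ξ) / b) atTop (𝓝 (-0 / b)) := by
    refine Tendsto.div_const (Tendsto.neg ?_) _
    exact Real.tendsto_exp_atBot.comp (tendsto_id.const_mul_atTop_of_neg (neg_neg_iff_pos.2 hb))
  have := integral_Ioi_of_hasDerivAt_of_tendsto' hd hint htend
  rw [this]; field_simp; ring

set_option maxHeartbeats 1000000 in
/-- Exponential decay of the ground state of the half-line Schrödinger–Poisson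
problem: `‖ψ₁₀‖_{L²(M,∞)} ≤ a e^{−bM}` for large `M`; in particular with
`M_ε = 1/ε` for small `ε`. -/
theorem groundstate_exponential_decay (U₀ U₀' ψ₀ ψ₀' : ℝ → ℝ) (E₀ : ℝ)
    (h : SPsol U₀ U₀' ψ₀ ψ₀' E₀) :
    ∃ a b : ℝ, 0 < a ∧ 0 < b ∧
      (∃ M₀ : ℝ, ∀ M : ℝ, M₀ ≤ M →
        Real.sqrt (∫ ξ in Ioi M, (ψ₀ ξ) ^ 2) ≤ a * Real.exp (-b * M)) ∧
      (∃ ε₀ : ℝ, 0 < ε₀ ∧ ∀ ε : ℝ, 0 < ε → ε < ε₀ →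
        Real.sqrt (∫ ξ in Ioi (1 / ε), (ψ₀ ξ) ^ 2) ≤
          a * Real.exp (-b * (1 / ε))) := by
  obtain ⟨⟨hUdiff, hU'L2, hU0, hUnn⟩, ⟨hψdiff, hψL2, hψ'L2, hψ0, hψnorm⟩,
    hψpos, hODE, hE, hU''⟩ := h
  -- Step A : U₀' is nonnegative on (0,∞) (it is decreasing and square-integrable)
  have hU'nn : ∀ x ∈ Ioi (0:ℝ), 0 ≤ U₀' x := by
    intro x₀ hx₀
    by_contra hneg
    push_neg at hneg
    have hanti : AntitoneOn U₀' (Ici x₀) :=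
      anti_aux (fun x hx => hU'' x (mem_Ioi.mpr (lt_of_lt_of_le (mem_Ioi.mp hx₀) (mem_Ici.mp hx))))
        (fun x _ => neg_nonpos.mpr (sq_nonneg _))
    refine aux_not_integrable hU'L2 (le_of_lt hx₀)
      (c := (U₀' x₀)^2) (pow_pos (abs_pos.mpr hneg.ne) 2 |>.trans_le (by rw [sq_abs])) ?_
    intro ξ hξ
    have h1 : U₀' ξ ≤ U₀' x₀ := hanti self_mem_Ici (mem_Ici.mpr hξ.le) hξ.le
    nlinarith
  -- U₀ is monotone on [t,∞) for every t > 0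
  have hUmono : ∀ t ∈ Ioi (0:ℝ), MonotoneOn U₀ (Ici t) := by
    intro t ht
    exact mono_aux (fun x _ => hUdiff x)
      (fun x hx => hU'nn x (mem_Ioi.mpr (lt_trans ht hx)))
  -- Step C : there is a point where U₀ exceeds E₀
  have hexists : ∃ x ∈ Ioi (0:ℝ), E₀ < U₀ x := by
    by_contra hcon
    push_neg at hcon
    have hanti : AntitoneOn ψ₀' (Ici 1) := by
      refine anti_aux (fun x hx => hODE x (mem_Ioi.mpr (lt_of_lt_of_le one_pos (mem_Ici.mp hx)))) ?_
      intro x hx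
      have hx0 : (0:ℝ) < x := lt_trans one_pos hx
      have h1 := hcon x (mem_Ioi.mpr hx0)
      have h2 := hψpos x (mem_Ioi.mpr hx0)
      nlinarith
    by_cases hcase : ∀ x ∈ Ici (1:ℝ), 0 ≤ ψ₀' x
    · have hm : MonotoneOn ψ₀ (Ici 1) :=
        mono_aux (fun x _ => hψdiff x) (fun x hx => hcase x (mem_Ici.mpr (mem_Ioi.mp hx).le))
      have hp1 : 0 < ψ₀ 1 := hψpos 1 (mem_Ioi.mpr one_pos)
      refine aux_not_integrable hψL2 zero_le_one (c := (ψ₀ 1)^2) (pow_pos hp1 2) ?_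
      intro ξ hξ
      have := hm self_mem_Ici (mem_Ici.mpr hξ.le) hξ.le
      nlinarith
    · push_neg at hcase
      obtain ⟨x₀, hx₀1, hx₀neg⟩ := hcase
      set m := -ψ₀' x₀ with hm
      have hmpos : 0 < m := by simp [hm]; linarith
      have hx₀pos : (0:ℝ) < x₀ := lt_of_lt_of_le one_pos hx₀1
      have hlin : AntitoneOn (fun ξ => ψ₀ ξ + m * ξ) (Ici x₀) := by
        refine anti_aux (f' := fun ξ => ψ₀' ξ + m)
          (fun x _ => (hψdiff x).add (by simpa using (hasDerivAt_id x).const_mul m)) ?_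
        intro x hx
        have := hanti hx₀1 (mem_Ici.mpr (hx₀1.trans hx.le)) hx.le
        simp only [hm]; linarith
      set ξ := x₀ + (ψ₀ x₀ + 1) / m with hξdef
      have hξgt : x₀ ≤ ξ := by
        have h0 : 0 < (ψ₀ x₀ + 1) / m :=
          div_pos (by nlinarith [hψpos x₀ (mem_Ioi.mpr hx₀pos)]) hmpos
        rw [hξdef]; linarith
      have h5 := hlin self_mem_Ici (mem_Ici.mpr hξgt) hξgt
      simp only at h5
      have hmul : m * ((ψ₀ x₀ + 1) / m) = ψ₀ x₀ + 1 := by field_simp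
      have hψξ : ψ₀ ξ ≤ -1 := by
        have : ψ₀ ξ + m * ξ ≤ ψ₀ x₀ + m * x₀ := h5
        rw [hξdef] at this ⊢
        nlinarith [hmul]
      have := hψpos ξ (mem_Ioi.mpr (lt_of_lt_of_le hx₀pos hξgt))
      linarith
  obtain ⟨x₁, hx₁pos, hx₁⟩ := hexists
  -- the threshold and constants
  set M₁ := max x₁ 1 with hM₁def
  have hM₁ : (1:ℝ) ≤ M₁ := le_max_right _ _
  have hM₁pos : (0:ℝ) < M₁ := lt_of_lt_of_le one_pos hM₁
  have hUM₁ : E₀ < U₀ M₁ :=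
    lt_of_lt_of_le hx₁ (hUmono x₁ hx₁pos self_mem_Ici (mem_Ici.mpr (le_max_left _ _))
      (le_max_left _ _))
  set δ := U₀ M₁ - E₀ with hδdef
  have hδ : 0 < δ := by rw [hδdef]; linarith
  set b := Real.sqrt δ with hbdef
  have hb : 0 < b := Real.sqrt_pos.mpr hδ
  have hb2 : b ^ 2 = δ := Real.sq_sqrt hδ.le
  have hUge : ∀ x ∈ Ici M₁, E₀ + δ ≤ U₀ x := by
    intro x hx
    have := hUmono M₁ (mem_Ioi.mpr hM₁pos) self_mem_Ici hx hx
    rw [hδdef]; linarith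
  have hmemIoi : ∀ x ∈ Ici M₁, x ∈ Ioi (0:ℝ) :=
    fun x hx => mem_Ioi.mpr (lt_of_lt_of_le hM₁pos hx)
  -- Step E : ψ₀' ≤ 0 on [M₁,∞)
  have hψ'le0 : ∀ x ∈ Ici M₁, ψ₀' x ≤ 0 := by
    intro x₀ hx₀
    by_contra hgt
    push_neg at hgt
    have hψ'mono : MonotoneOn ψ₀' (Ici M₁) := by
      refine mono_aux (fun x hx => hODE x (hmemIoi x hx)) ?_
      intro x hx
      have h1 := hUge x (mem_Ici.mpr (mem_Ioi.mp hx).le)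
      have h2 := hψpos x (hmemIoi x (mem_Ici.mpr (mem_Ioi.mp hx).le))
      nlinarith
    have hψmono : MonotoneOn ψ₀ (Ici x₀) := by
      refine mono_aux (fun x _ => hψdiff x) ?_
      intro x hx
      have := hψ'mono hx₀ (mem_Ici.mpr (hx₀.trans hx.le)) hx.le
      linarith
    have hx₀pos : (0:ℝ) < x₀ := hmemIoi x₀ hx₀
    have hpx₀ : 0 < ψ₀ x₀ := hψpos x₀ (mem_Ioi.mpr hx₀pos)
    refine aux_not_integrable hψL2 hx₀pos.le (c := (ψ₀ x₀)^2) (pow_pos hpx₀ 2) ?_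
    intro ξ hξ
    have := hψmono self_mem_Ici (mem_Ici.mpr hξ.le) hξ.le
    nlinarith
  -- Step F : ψ₀ antitone on [M₁,∞)
  have hψanti : AntitoneOn ψ₀ (Ici M₁) :=
    anti_aux (fun x _ => hψdiff x) (fun x hx => hψ'le0 x (mem_Ici.mpr (mem_Ioi.mp hx).le))
  -- Step G : g := ψ₀' + b ψ₀ ≤ 0 on [M₁,∞)
  set g : ℝ → ℝ := fun ξ => ψ₀' ξ + b * ψ₀ ξ with hgdef
  have hgd : ∀ x ∈ Ici M₁, HasDerivAt g ((U₀ x - E₀) * ψ₀ x + b * ψ₀' x) x :=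
    fun x hx => (hODE x (hmemIoi x hx)).add ((hψdiff x).const_mul b)
  have hGd : ∀ x ∈ Ici M₁, HasDerivAt (fun ξ => Real.exp (-b * ξ) * g ξ)
      (Real.exp (-b * x) * ((U₀ x - E₀ - δ) * ψ₀ x)) x := by
    intro x hx
    have h1 : HasDerivAt (fun ξ : ℝ => Real.exp (-b * ξ)) (Real.exp (-b * x) * (-b * 1)) x :=
      HasDerivAt.exp ((hasDerivAt_id x).const_mul (-b))
    have h2 := h1.mul (hgd x hx)
    refine h2.congr_deriv ?_
    simp only [hgdef]
    rw [← hb2]; ring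
  have hGmono : MonotoneOn (fun ξ => Real.exp (-b * ξ) * g ξ) (Ici M₁) := by
    refine mono_aux hGd ?_
    intro x hx
    have h1 := hUge x (mem_Ici.mpr (mem_Ioi.mp hx).le)
    have h2 := (hψpos x (hmemIoi x (mem_Ici.mpr (mem_Ioi.mp hx).le))).le
    exact mul_nonneg (Real.exp_pos _).le (mul_nonneg (by linarith) h2)
  have hgle : ∀ x ∈ Ici M₁, g x ≤ 0 := by
    intro x₀ hx₀
    by_contra hgt
    push_neg at hgt
    set P := ψ₀ M₁ with hP
    have hPpos : 0 < P := hψpos M₁ (mem_Ioi.mpr hM₁pos)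
    set s := g x₀ with hs
    set T := P / s + 1 with hT
    have hTpos : 0 < T := by
      have := div_pos hPpos hgt
      rw [hT]; linarith
    set ξ := x₀ + T with hξdef
    have hξge : x₀ ≤ ξ := by rw [hξdef]; linarith
    have hξM : ξ ∈ Ici M₁ := mem_Ici.mpr (hx₀.trans hξge)
    have h1 : Real.exp (-b * x₀) * s ≤ Real.exp (-b * ξ) * g ξ :=
      hGmono hx₀ hξM hξge
    have h2 : g ξ ≤ b * P := by
      have ha := hψ'le0 ξ hξM
      have hψle : ψ₀ ξ ≤ P := hψanti self_mem_Ici hξM (hx₀.trans hξge)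
      simp only [hgdef]
      nlinarith
    have h9 : Real.exp (-b * ξ) * g ξ ≤ Real.exp (-b * ξ) * (b * P) :=
      mul_le_mul_of_nonneg_left h2 (Real.exp_pos _).le
    have hexp := Real.add_one_le_exp (b * T)
    have hsT : s * T = P + s := by rw [hT]; field_simp
    have hb7 : b * (s * T) = b * (P + s) := by rw [hsT]
    have hint1 : s * (b * T + 1) ≤ s * Real.exp (b * T) :=
      mul_le_mul_of_nonneg_left hexp hgt.le
    have h7 : b * P < s * Real.exp (b * T) := by nlinarith [mul_pos hb hgt]
    have h10 : Real.exp (-b * T) * (b * P) < s := by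
      have hE1 : Real.exp (-b * T) * Real.exp (b * T) = 1 := by
        rw [← Real.exp_add]; ring_nf; exact Real.exp_zero
      calc Real.exp (-b * T) * (b * P)
          < Real.exp (-b * T) * (s * Real.exp (b * T)) :=
            mul_lt_mul_of_pos_left h7 (Real.exp_pos _)
        _ = s * (Real.exp (-b * T) * Real.exp (b * T)) := by ring
        _ = s := by rw [hE1, mul_one]
    have hsplit : Real.exp (-b * ξ) = Real.exp (-b * x₀) * Real.exp (-b * T) := by
      rw [hξdef, ← Real.exp_add]; congr 1; ring
    have hfin : Real.exp (-b * x₀) * s < Real.exp (-b * x₀) * s := by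
      calc Real.exp (-b * x₀) * s ≤ Real.exp (-b * ξ) * g ξ := h1
        _ ≤ Real.exp (-b * ξ) * (b * P) := h9
        _ = Real.exp (-b * x₀) * (Real.exp (-b * T) * (b * P)) := by rw [hsplit]; ring
        _ < Real.exp (-b * x₀) * s := mul_lt_mul_of_pos_left h10 (Real.exp_pos _)
    exact lt_irrefl _ hfin
  -- Step H : pointwise exponential decay of ψ₀
  set C := Real.exp (b * M₁) * ψ₀ M₁ with hCdef
  have hCpos : 0 < C := mul_pos (Real.exp_pos _) (hψpos M₁ (mem_Ioi.mpr hM₁pos))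
  have hFanti : AntitoneOn (fun ξ => Real.exp (b * ξ) * ψ₀ ξ) (Ici M₁) := by
    refine anti_aux (f' := fun x => Real.exp (b * x) * g x) ?_ ?_
    · intro x _
      have h1 : HasDerivAt (fun ξ : ℝ => Real.exp (b * ξ)) (Real.exp (b * x) * (b * 1)) x :=
        HasDerivAt.exp ((hasDerivAt_id x).const_mul b)
      have h2 := h1.mul (hψdiff x)
      refine h2.congr_deriv ?_
      simp only [hgdef]; ring
    · intro x hx
      exact mul_nonpos_iff.mpr (Or.inl ⟨(Real.exp_pos _).le, hgle x (mem_Ici.mpr (mem_Ioi.mp hx).le)⟩)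
  have hbound : ∀ ξ ∈ Ici M₁, ψ₀ ξ ≤ C * Real.exp (-b * ξ) := by
    intro ξ hξ
    have key : Real.exp (b * ξ) * ψ₀ ξ ≤ Real.exp (b * M₁) * ψ₀ M₁ :=
      hFanti self_mem_Ici hξ hξ
    have h5 : Real.exp (b * ξ) * Real.exp (-b * ξ) = 1 := by
      rw [← Real.exp_add]; ring_nf; exact Real.exp_zero
    have h6 := mul_le_mul_of_nonneg_right key (Real.exp_pos (-b * ξ)).le
    calc ψ₀ ξ = Real.exp (b * ξ) * ψ₀ ξ * Real.exp (-b * ξ) := by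
          rw [mul_comm (Real.exp (b * ξ)) (ψ₀ ξ), mul_assoc, h5, mul_one]
      _ ≤ Real.exp (b * M₁) * ψ₀ M₁ * Real.exp (-b * ξ) := h6
      _ = C * Real.exp (-b * ξ) := by rw [hCdef]
  -- Step I : tail L² bound
  clear_value M₁ δ b g C
  have h2b : (0:ℝ) < 2 * b := by linarith
  have hmain : ∀ M : ℝ, M₁ ≤ M →
      Real.sqrt (∫ ξ in Ioi M, (ψ₀ ξ) ^ 2) ≤
        (C / Real.sqrt (2 * b)) * Real.exp (-b * M) := by
    intro M hM
    have hMpos : (0:ℝ) < M := lt_of_lt_of_le hM₁pos hM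
    have hInt1 : IntegrableOn (fun ξ => (ψ₀ ξ) ^ 2) (Ioi M) :=
      hψL2.mono_set (Ioi_subset_Ioi hMpos.le)
    have hInt2 : IntegrableOn (fun ξ => C ^ 2 * Real.exp (-(2 * b) * ξ)) (Ioi M) :=
      (exp_neg_integrableOn_Ioi M h2b).const_mul _
    have hptwise : ∀ ξ ∈ Ioi M, (ψ₀ ξ) ^ 2 ≤ C ^ 2 * Real.exp (-(2 * b) * ξ) := by
      intro ξ hξ
      have hξM₁ : ξ ∈ Ici M₁ := mem_Ici.mpr (hM.trans hξ.le)
      have hbd := hbound ξ hξM₁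
      have h0 := (hψpos ξ (hmemIoi ξ hξM₁)).le
      have hsq : (C * Real.exp (-b * ξ)) ^ 2 = C ^ 2 * Real.exp (-(2 * b) * ξ) := by
        rw [mul_pow, sq (Real.exp (-b * ξ)), ← Real.exp_add]
        congr 1; ring
      calc (ψ₀ ξ) ^ 2 ≤ (C * Real.exp (-b * ξ)) ^ 2 := by nlinarith
        _ = C ^ 2 * Real.exp (-(2 * b) * ξ) := hsq
    have hle : (∫ ξ in Ioi M, (ψ₀ ξ) ^ 2) ≤
        ∫ ξ in Ioi M, C ^ 2 * Real.exp (-(2 * b) * ξ) :=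
      setIntegral_mono_on hInt1 hInt2 measurableSet_Ioi hptwise
    have hval : (∫ ξ in Ioi M, C ^ 2 * Real.exp (-(2 * b) * ξ)) =
        C ^ 2 * (Real.exp (-(2 * b) * M) / (2 * b)) := by
      rw [integral_const_mul, exp_tail_integral h2b]
    have hrhs : C ^ 2 * (Real.exp (-(2 * b) * M) / (2 * b)) =
        ((C / Real.sqrt (2 * b)) * Real.exp (-b * M)) ^ 2 := by
      have h1 : (Real.sqrt (2 * b)) ^ 2 = 2 * b := Real.sq_sqrt h2b.le
      have h2 : (Real.exp (-b * M)) ^ 2 = Real.exp (-(2 * b) * M) := by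
        rw [sq, ← Real.exp_add]; congr 1; ring
      rw [mul_pow, div_pow, h1, h2]; ring
    have hfinal : (∫ ξ in Ioi M, (ψ₀ ξ) ^ 2) ≤
        ((C / Real.sqrt (2 * b)) * Real.exp (-b * M)) ^ 2 := by
      rw [← hrhs, ← hval]; exact hle
    have hnn : 0 ≤ (C / Real.sqrt (2 * b)) * Real.exp (-b * M) := by positivity
    calc Real.sqrt (∫ ξ in Ioi M, (ψ₀ ξ) ^ 2)
        ≤ Real.sqrt (((C / Real.sqrt (2 * b)) * Real.exp (-b * M)) ^ 2) :=
          Real.sqrt_le_sqrt hfinal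
      _ = (C / Real.sqrt (2 * b)) * Real.exp (-b * M) := Real.sqrt_sq hnn
  refine ⟨C / Real.sqrt (2 * b), b,
    div_pos hCpos (Real.sqrt_pos.mpr h2b), hb, ⟨M₁, hmain⟩,
    ⟨1 / M₁, one_div_pos.mpr hM₁pos, ?_⟩⟩
  intro ε hε hεlt
  refine hmain (1 / ε) ?_
  have h1 : ε * M₁ < 1 := by
    have := (lt_div_iff₀ hM₁pos).mp hεlt
    linarith
  rw [le_div_iff₀ hε]
  nlinarith
end
end

section
/- Let V ∈ Ḣ¹₀(ℝ⁺) be such that E₁^∞[V] < liminf_{ξ→+∞} V(ξ), and set V^∞ = liminf_{ξ→+∞} V(ξ). For ε > 0 let I_ε = inf{∫₀^∞ |φ′|² dξ + ∫₀^∞ V φ² dξ : φ ∈ H¹(0,∞), φ(0) = 0, ∫₀^∞ φ² dξ = ε} and I_ε^∞ = inf{∫₀^∞ |φ′|² dξ + V^∞ ∫₀^∞ φ² dξ : φ ∈ H¹(0,∞), φ(0) = 0, ∫₀^∞ φ² dξ = ε}. Then the strict subadditivity inequality I_ε < I_α + I^∞_{ε−α} holds for all 0 < α < ε. -/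
open MeasureTheory Set Filter

noncomputable section

/-- `I_ε = inf { ∫₀^∞ |φ′|² + ∫₀^∞ V φ² : φ ∈ H¹(0,∞), φ(0) = 0, ∫₀^∞ φ² = ε }`. -/
def Iep (V : ℝ → ℝ) (ε : ℝ) : ℝ :=
  sInf {e : ℝ | ∃ φ φd : ℝ → ℝ, (∀ ξ, HasDerivAt φ (φd ξ) ξ) ∧
    IntegrableOn (fun ξ => (φ ξ) ^ 2) (Ioi 0) ∧
    IntegrableOn (fun ξ => (φd ξ) ^ 2) (Ioi 0) ∧
    φ 0 = 0 ∧ (∫ ξ in Ioi (0 : ℝ), (φ ξ) ^ 2) = ε ∧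
    e = (∫ ξ in Ioi (0 : ℝ), (φd ξ) ^ 2) + ∫ ξ in Ioi (0 : ℝ), V ξ * (φ ξ) ^ 2}


open Pointwise

section Aux

lemma int_pow_exp (n : ℕ) {b : ℝ} (hb : 0 < b) :
    IntegrableOn (fun ξ : ℝ => ξ ^ n * Real.exp (-(b * ξ))) (Ioi 0) := by
  have h := integrableOn_rpow_mul_exp_neg_mul_rpow (s := (n : ℝ)) (p := 1) (b := b)
    (by exact_mod_cast lt_of_lt_of_le neg_one_lt_zero (Nat.cast_nonneg n)) one_pos hb
  refine h.congr_fun (fun x hx => ?_) measurableSet_Ioi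
  simp [Real.rpow_natCast]

lemma val_pow_exp (n : ℕ) {b : ℝ} (hb : 0 < b) :
    ∫ ξ in Ioi (0:ℝ), ξ ^ n * Real.exp (-(b * ξ)) = (Nat.factorial n : ℝ) / b ^ (n + 1) := by
  have h := Real.integral_rpow_mul_exp_neg_mul_Ioi (a := (n : ℝ) + 1) (r := b)
    (by positivity) hb
  rw [show ((n : ℝ) + 1) - 1 = (n : ℝ) by ring] at h
  rw [setIntegral_congr_fun measurableSet_Ioi
    (fun t (ht : t ∈ Ioi (0:ℝ)) => by simp [Real.rpow_natCast] :
      EqOn (fun t : ℝ => t ^ ((n:ℝ)) * Real.exp (-(b * t)))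
        (fun t : ℝ => t ^ n * Real.exp (-(b * t))) (Ioi 0))] at h
  rw [h, Real.Gamma_nat_eq_factorial, show ((n : ℝ) + 1) = ((n + 1 : ℕ) : ℝ) by push_cast; ring,
    Real.rpow_natCast]
  rw [div_pow, one_pow]
  ring

lemma psib_facts {b : ℝ} (hb : 0 < b) :
    MemSinf (fun ξ => (2 * b * Real.sqrt b) * (ξ * Real.exp (-(b * ξ))))
      (fun ξ => (2 * b * Real.sqrt b) * ((1 - b * ξ) * Real.exp (-(b * ξ)))) ∧
    (∫ ξ in Ioi (0:ℝ), ((2 * b * Real.sqrt b) * ((1 - b * ξ) * Real.exp (-(b * ξ)))) ^ 2)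
      = b ^ 2 := by
  have hb2 : (0:ℝ) < 2 * b := by linarith
  have hsb : Real.sqrt b ^ 2 = b := Real.sq_sqrt hb.le
  have he : ∀ ξ : ℝ, Real.exp (-(b * ξ)) ^ 2 = Real.exp (-(2 * b * ξ)) := fun ξ => by
    rw [sq, ← Real.exp_add]; ring_nf
  have hsq1 : ∀ ξ : ℝ, ((2 * b * Real.sqrt b) * (ξ * Real.exp (-(b * ξ)))) ^ 2
      = (4 * b ^ 3) * (ξ ^ 2 * Real.exp (-(2 * b * ξ))) := fun ξ => by
    rw [mul_pow, mul_pow, mul_pow, mul_pow, hsb, he]; ring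
  have hsq2 : ∀ ξ : ℝ, ((2 * b * Real.sqrt b) * ((1 - b * ξ) * Real.exp (-(b * ξ)))) ^ 2
      = (4 * b ^ 3) * (ξ ^ 0 * Real.exp (-(2 * b * ξ)))
        - (8 * b ^ 4) * (ξ ^ 1 * Real.exp (-(2 * b * ξ)))
        + (4 * b ^ 5) * (ξ ^ 2 * Real.exp (-(2 * b * ξ))) := fun ξ => by
    rw [mul_pow, mul_pow, mul_pow, mul_pow, hsb, he]; ring
  have i0 := int_pow_exp 0 hb2
  have i1 := int_pow_exp 1 hb2
  have i2 := int_pow_exp 2 hb2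
  have j2 : IntegrableOn (fun ξ : ℝ => (4 * b ^ 3) * (ξ ^ 2 * Real.exp (-(2 * b * ξ)))) (Ioi 0) := by
    exact i2.const_mul _
  have jsum : IntegrableOn (fun ξ : ℝ => (4 * b ^ 3) * (ξ ^ 0 * Real.exp (-(2 * b * ξ)))
      - (8 * b ^ 4) * (ξ ^ 1 * Real.exp (-(2 * b * ξ)))
      + (4 * b ^ 5) * (ξ ^ 2 * Real.exp (-(2 * b * ξ)))) (Ioi 0) := by
    exact ((i0.const_mul _).sub (i1.const_mul _)).add (i2.const_mul _)
  have hI1 : IntegrableOn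
      (fun ξ => ((2 * b * Real.sqrt b) * (ξ * Real.exp (-(b * ξ)))) ^ 2) (Ioi 0) :=
    IntegrableOn.congr_fun j2 (fun ξ _ => (hsq1 ξ).symm) measurableSet_Ioi
  have hI2 : IntegrableOn
      (fun ξ => ((2 * b * Real.sqrt b) * ((1 - b * ξ) * Real.exp (-(b * ξ)))) ^ 2) (Ioi 0) :=
    IntegrableOn.congr_fun jsum (fun ξ _ => (hsq2 ξ).symm) measurableSet_Ioi
  have hnorm : (∫ ξ in Ioi (0:ℝ), ((2 * b * Real.sqrt b) * (ξ * Real.exp (-(b * ξ)))) ^ 2) = 1 := by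
    rw [setIntegral_congr_fun measurableSet_Ioi (fun ξ _ => hsq1 ξ), integral_const_mul,
      val_pow_exp 2 hb2]
    norm_num [Nat.factorial]
    field_simp
    ring
  have hder : ∀ ξ, HasDerivAt (fun ξ => (2 * b * Real.sqrt b) * (ξ * Real.exp (-(b * ξ))))
      ((2 * b * Real.sqrt b) * ((1 - b * ξ) * Real.exp (-(b * ξ)))) ξ := by
    intro ξ
    have h1 : HasDerivAt (fun ξ : ℝ => -(b * ξ)) (-b) ξ := by
      have h := ((hasDerivAt_id ξ).const_mul b).neg; simp only [mul_one] at h; exact h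
    have h3 := (hasDerivAt_id ξ).mul h1.exp
    have h4 := h3.const_mul (2 * b * Real.sqrt b)
    refine h4.congr_deriv ?_
    simp only [id_eq]
    ring
  have hval2 : (∫ ξ in Ioi (0:ℝ),
      ((2 * b * Real.sqrt b) * ((1 - b * ξ) * Real.exp (-(b * ξ)))) ^ 2) = b ^ 2 := by
    have isub : IntegrableOn (fun ξ : ℝ => (4 * b ^ 3) * (ξ ^ 0 * Real.exp (-(2 * b * ξ)))
        - (8 * b ^ 4) * (ξ ^ 1 * Real.exp (-(2 * b * ξ)))) (Ioi 0) := by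
      exact (i0.const_mul _).sub (i1.const_mul _)
    rw [setIntegral_congr_fun measurableSet_Ioi (fun ξ _ => hsq2 ξ),
      integral_add isub (i2.const_mul (4 * b ^ 5)),
      integral_sub (i0.const_mul (4 * b ^ 3)) (i1.const_mul (8 * b ^ 4)),
      integral_const_mul, integral_const_mul, integral_const_mul,
      val_pow_exp 0 hb2, val_pow_exp 1 hb2, val_pow_exp 2 hb2]
    norm_num [Nat.factorial]
    field_simp
    ring
  exact ⟨⟨hder, hI1, hI2, by simp, hnorm⟩, hval2⟩

/-- Scaling a candidate function by `√c`. -/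
lemma scale_props (V : ℝ → ℝ) {φ φd : ℝ → ℝ} {c : ℝ} (hc : 0 < c)
    (hd : ∀ ξ, HasDerivAt φ (φd ξ) ξ)
    (hi1 : IntegrableOn (fun ξ => (φ ξ) ^ 2) (Ioi 0))
    (hi2 : IntegrableOn (fun ξ => (φd ξ) ^ 2) (Ioi 0)) :
    (∀ ξ, HasDerivAt (fun ξ => Real.sqrt c * φ ξ) (Real.sqrt c * φd ξ) ξ) ∧
    IntegrableOn (fun ξ => (Real.sqrt c * φ ξ) ^ 2) (Ioi 0) ∧
    IntegrableOn (fun ξ => (Real.sqrt c * φd ξ) ^ 2) (Ioi 0) ∧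
    (∫ ξ in Ioi (0 : ℝ), (Real.sqrt c * φ ξ) ^ 2) = c * ∫ ξ in Ioi (0 : ℝ), (φ ξ) ^ 2 ∧
    ((∫ ξ in Ioi (0 : ℝ), (Real.sqrt c * φd ξ) ^ 2)
        + ∫ ξ in Ioi (0 : ℝ), V ξ * (Real.sqrt c * φ ξ) ^ 2)
      = c * ((∫ ξ in Ioi (0 : ℝ), (φd ξ) ^ 2) + ∫ ξ in Ioi (0 : ℝ), V ξ * (φ ξ) ^ 2) := by
  have hsc : Real.sqrt c ^ 2 = c := Real.sq_sqrt hc.le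
  have e1 : ∀ ψ : ℝ → ℝ, (fun ξ => (Real.sqrt c * ψ ξ) ^ 2) = fun ξ => c * (ψ ξ) ^ 2 := by
    intro ψ; funext ξ; rw [mul_pow, hsc]
  have e2 : (fun ξ => V ξ * (Real.sqrt c * φ ξ) ^ 2) = fun ξ => c * (V ξ * (φ ξ) ^ 2) := by
    funext ξ; rw [mul_pow, hsc]; ring
  refine ⟨fun ξ => (hd ξ).const_mul _, ?_, ?_, ?_, ?_⟩
  · rw [e1]; exact hi1.const_mul _
  · rw [e1]; exact hi2.const_mul _
  · rw [e1]; exact integral_const_mul c _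
  · rw [e1, e2, integral_const_mul, integral_const_mul]; ring

lemma Iep_eq (V : ℝ → ℝ) {ε : ℝ} (hε : 0 < ε) : Iep V ε = ε * E1inf V := by
  have hset : {e : ℝ | ∃ φ φd : ℝ → ℝ, (∀ ξ, HasDerivAt φ (φd ξ) ξ) ∧
      IntegrableOn (fun ξ => (φ ξ) ^ 2) (Ioi 0) ∧
      IntegrableOn (fun ξ => (φd ξ) ^ 2) (Ioi 0) ∧
      φ 0 = 0 ∧ (∫ ξ in Ioi (0 : ℝ), (φ ξ) ^ 2) = ε ∧
      e = (∫ ξ in Ioi (0 : ℝ), (φd ξ) ^ 2) + ∫ ξ in Ioi (0 : ℝ), V ξ * (φ ξ) ^ 2}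
      = ε • {e : ℝ | ∃ ψ ψ' : ℝ → ℝ, MemSinf ψ ψ' ∧ Jfun V ψ ψ' = e} := by
    ext x
    constructor
    · rintro ⟨φ, φd, hd, hi1, hi2, h0, hm, he⟩
      have hc : (0:ℝ) < ε⁻¹ := by positivity
      obtain ⟨p1, p2, p3, p4, p5⟩ := scale_props V hc hd hi1 hi2
      rw [Set.mem_smul_set]
      refine ⟨(∫ ξ in Ioi (0:ℝ), (Real.sqrt ε⁻¹ * φd ξ) ^ 2)
        + ∫ ξ in Ioi (0:ℝ), V ξ * (Real.sqrt ε⁻¹ * φ ξ) ^ 2,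
        ⟨_, _, ⟨p1, p2, p3, by simp [h0], by rw [p4, hm]; field_simp⟩, rfl⟩, ?_⟩
      rw [p5, ← he, smul_eq_mul]
      field_simp
    · rintro hx
      rw [Set.mem_smul_set] at hx
      obtain ⟨j, ⟨ψ, ψ', ⟨q1, q2, q3, q4, q5⟩, hj⟩, hxj⟩ := hx
      obtain ⟨p1, p2, p3, p4, p5⟩ := scale_props V hε q1 q2 q3
      refine ⟨_, _, p1, p2, p3, by simp [q4], by rw [p4, q5, mul_one], ?_⟩
      rw [p5, ← hxj, smul_eq_mul, ← hj]
      rfl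
  rw [Iep, hset, E1inf, Real.sInf_smul_of_nonneg hε.le, smul_eq_mul]

lemma E1inf_const (v : ℝ) : E1inf (fun _ => v) = v := by
  set S := {e : ℝ | ∃ ψ ψ' : ℝ → ℝ, MemSinf ψ ψ' ∧ Jfun (fun _ => v) ψ ψ' = e} with hS
  have hbd : ∀ e ∈ S, v ≤ e := by
    rintro e ⟨ψ, ψ', ⟨_, _, _, _, hm⟩, hJ⟩
    have h2 : (∫ ξ in Ioi (0:ℝ), v * (ψ ξ) ^ 2) = v := by
      rw [integral_const_mul, hm, mul_one]
    have h1 : 0 ≤ ∫ ξ in Ioi (0:ℝ), (ψ' ξ) ^ 2 :=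
      integral_nonneg fun ξ => sq_nonneg _
    rw [← hJ, Jfun]
    rw [show (∫ ξ in Ioi (0:ℝ), (fun _ : ℝ => v) ξ * (ψ ξ) ^ 2) = v from h2]
    linarith
  have hel : ∀ b : ℝ, 0 < b → (b ^ 2 + v) ∈ S := by
    intro b hb
    obtain ⟨hmem, hval⟩ := psib_facts hb
    refine ⟨_, _, hmem, ?_⟩
    rw [Jfun, hval,
      show (∫ ξ in Ioi (0:ℝ), (fun _ : ℝ => v) ξ
          * ((2 * b * Real.sqrt b) * (ξ * Real.exp (-(b * ξ)))) ^ 2) = v by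
        rw [show (fun ξ : ℝ => (fun _ : ℝ => v) ξ
            * ((2 * b * Real.sqrt b) * (ξ * Real.exp (-(b * ξ)))) ^ 2)
          = fun ξ : ℝ => v * ((2 * b * Real.sqrt b) * (ξ * Real.exp (-(b * ξ)))) ^ 2 from rfl,
          integral_const_mul, hmem.2.2.2.2, mul_one]]
  have hbdd : BddBelow S := ⟨v, hbd⟩
  refine le_antisymm ?_ (le_csInf ⟨1 + v, by simpa only [one_pow] using hel 1 one_pos⟩ hbd)
  refine le_of_forall_pos_le_add fun η hη => ?_
  have hb : (0:ℝ) < Real.sqrt η := Real.sqrt_pos.mpr hη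
  have := csInf_le hbdd (hel _ hb)
  rwa [Real.sq_sqrt hη.le, add_comm] at this

end Aux

/-- Strict subadditivity: `I_ε < I_α + I^∞_{ε−α}` for all `0 < α < ε`, where
`I^∞` is the problem with the constant potential `V^∞ = liminf_{ξ→+∞} V`. -/
theorem strict_subadditivity (V V' : ℝ → ℝ) (hV : MemH1dot V V') (Vinf : ℝ)
    (hVinf : Filter.liminf (fun ξ => (V ξ : EReal)) Filter.atTop = (Vinf : EReal))
    (hlt : E1inf V < Vinf) :
    ∀ α ε : ℝ, 0 < α → α < ε →
      Iep V ε < Iep V α + Iep (fun _ => Vinf) (ε - α) := by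
  intro α ε hα hαε
  have hε : 0 < ε := hα.trans hαε
  have hεα : 0 < ε - α := by linarith
  rw [Iep_eq V hε, Iep_eq V hα, Iep_eq _ hεα, E1inf_const]
  nlinarith

end
end
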